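/- The series ∑_{k=1}^∞ (1/(2k+1)) · C(2k,k)/4^k equals π/2 − 1. -/

import Mathlib

open scoped BigOperators
open Real

noncomputable def cb (k : ℕ) : ℝ := (Nat.choose (2*k) k : ℝ) / 4^k

noncomputable def H (k : ℕ) : ℝ := ∑ j ∈ Finset.range k, (1:ℝ)/(j+1)

noncomputable def oh (k : ℕ) : ℝ := ∑ j ∈ Finset.range k, (1:ℝ)/(2*j+1)



open Finset Nat

lemma symm_key (n : ℕ) :
    2 * (∑ k ∈ range (n+1), k * (centralBinom k * centralBinom (n-k)))
      = n * ∑ k ∈ range (n+1), centralBinom k * centralBinom (n-k) := by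
  have h := Finset.sum_range_reflect (fun k => k * (centralBinom k * centralBinom (n-k))) (n+1)
  -- h : ∑ j in range (n+1), f (n+1-1-j) = ∑ j, f j
  rw [two_mul, Finset.mul_sum]
  nth_rewrite 1 [← h]
  rw [← Finset.sum_add_distrib]
  apply Finset.sum_congr rfl
  intro k hk
  rw [Finset.mem_range] at hk
  have hk' : k ≤ n := by omega
  have e1 : n + 1 - 1 - k = n - k := by omega
  have e2 : n - (n - k) = k := by omega
  rw [e1, e2, mul_comm (centralBinom (n-k)) (centralBinom k), ← add_mul,
    Nat.sub_add_cancel hk']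

lemma centralBinom_conv (n : ℕ) :
    ∑ k ∈ range (n+1), centralBinom k * centralBinom (n-k) = 4^n := by
  induction n with
  | zero => simp
  | succ n ih =>
    have key := symm_key (n+1)
    have shift : ∑ k ∈ range (n+2), k * (centralBinom k * centralBinom (n+1-k))
        = ∑ j ∈ range (n+1), (j+1) * (centralBinom (j+1) * centralBinom (n-j)) := by
      rw [Finset.sum_range_succ' (fun k => k * (centralBinom k * centralBinom (n+1-k))) (n+1)]
      simp
    have hrec : ∀ j, (j+1) * (centralBinom (j+1) * centralBinom (n-j))
        = 2 * (2*j+1) * (centralBinom j * centralBinom (n-j)) := by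
      intro j
      rw [← mul_assoc, succ_mul_centralBinom_succ, mul_assoc]
    have shift2 : ∑ j ∈ range (n+1), (j+1) * (centralBinom (j+1) * centralBinom (n-j))
        = 4 * ∑ j ∈ range (n+1), j * (centralBinom j * centralBinom (n-j))
          + 2 * ∑ j ∈ range (n+1), centralBinom j * centralBinom (n-j) := by
      rw [Finset.mul_sum, Finset.mul_sum, ← Finset.sum_add_distrib]
      apply Finset.sum_congr rfl
      intro j _
      rw [hrec j]; ring
    have key2 := symm_key n
    -- key : 2 * Σ' = (n+1) * b(n+1)   where Σ' over range (n+2)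
    -- so (n+1) * b(n+1) = 2*(4*S + 2*b n) where 2*S = n * b n
    have hm : (n+1) * (∑ k ∈ range (n+2), centralBinom k * centralBinom (n+1-k))
        = (n+1) * 4^(n+1) := by
      rw [← key, shift, shift2]
      have : 4 * ∑ j ∈ range (n+1), j * (centralBinom j * centralBinom (n-j))
          = 2 * (2 * ∑ j ∈ range (n+1), j * (centralBinom j * centralBinom (n-j))) := by ring
      rw [this, key2, ih]
      ring
    have := Nat.eq_of_mul_eq_mul_left (Nat.succ_pos n) hm
    exact this

lemma cb_eq (k : ℕ) : cb k = (centralBinom k : ℝ) / 4^k := rfl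

lemma cb_zero : cb 0 = 1 := by simp [cb]

lemma cb_pos (k : ℕ) : 0 < cb k := by
  rw [cb_eq]
  have := centralBinom_pos k
  positivity

lemma cb_succ (k : ℕ) : cb (k+1) = cb k * ((2*k+1) / (2*k+2)) := by
  rw [cb_eq, cb_eq]
  have h := succ_mul_centralBinom_succ k
  have h' : ((k:ℝ)+1) * (centralBinom (k+1) : ℝ) = 2 * (2*k+1) * centralBinom k := by
    exact_mod_cast h
  have hk : ((k:ℝ)+1) ≠ 0 := by positivity
  field_simp
  linear_combination (2 * (4:ℝ)^k) * h'

lemma cb_le_one (k : ℕ) : cb k ≤ 1 := by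
  induction k with
  | zero => rw [cb_zero]
  | succ k ih =>
    rw [cb_succ]
    have h1 : (2*(k:ℝ)+1)/(2*k+2) ≤ 1 := by
      rw [div_le_one (by positivity)]; linarith
    have := cb_pos k
    nlinarith

lemma cb_sq_le (k : ℕ) : cb k ^ 2 * (2*k+1) ≤ 1 := by
  induction k with
  | zero => rw [cb_zero]; norm_num
  | succ k ih =>
    rw [cb_succ]
    have hp := cb_pos k
    have h2 : ((2*(k:ℝ)+1)/(2*k+2))^2 * (2*(k+1)+1) ≤ (2*k+1) := by
      rw [div_pow, div_mul_eq_mul_div, div_le_iff₀ (by positivity)]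
      push_cast
      nlinarith [sq_nonneg ((k:ℝ))]
    push_cast
    calc (cb k * ((2*(k:ℝ)+1)/(2*k+2)))^2 * (2*((k:ℝ)+1)+1)
        = cb k ^2 * (((2*(k:ℝ)+1)/(2*k+2))^2 * (2*((k:ℕ):ℝ)+2+1)) := by push_cast; ring
      _ ≤ cb k ^2 * (2*k+1) := by
          apply mul_le_mul_of_nonneg_left _ (by positivity)
          have := h2; push_cast at this ⊢; linarith
      _ ≤ 1 := ih

lemma summable_cb_pow {x : ℝ} (h0 : 0 ≤ x) (h1 : x < 1) :
    Summable (fun k => cb k * x^k) := by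
  apply Summable.of_nonneg_of_le
    (fun k => mul_nonneg (cb_pos k).le (pow_nonneg h0 k))
    (fun k => ?_) (summable_geometric_of_lt_one h0 h1)
  calc cb k * x^k ≤ 1 * x^k :=
        mul_le_mul_of_nonneg_right (cb_le_one k) (pow_nonneg h0 k)
    _ = x^k := one_mul _

lemma tsum_cb_pow {x : ℝ} (h0 : 0 ≤ x) (h1 : x < 1) :
    (∑' k, cb k * x^k) = 1 / Real.sqrt (1-x) := by
  have hs := summable_cb_pow h0 h1
  have hnorm : Summable (fun k => ‖cb k * x^k‖) := by
    have h : ∀ k, ‖cb k * x^k‖ = cb k * x^k := fun k =>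
      abs_of_nonneg (mul_nonneg (cb_pos k).le (pow_nonneg h0 k))
    simp only [h]; exact hs
  have hmul := tsum_mul_tsum_eq_tsum_sum_range_of_summable_norm hnorm hnorm
  have hinner : ∀ n, ∑ k ∈ Finset.range (n+1), (cb k * x^k) * (cb (n-k) * x^(n-k)) = x^n := by
    intro n
    have : ∀ k ∈ Finset.range (n+1), (cb k * x^k) * (cb (n-k) * x^(n-k))
        = ((centralBinom k * centralBinom (n-k) : ℕ) : ℝ) * (x^n / 4^n) := by
      intro k hk
      rw [Finset.mem_range] at hk
      have hkn : k ≤ n := by omega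
      rw [cb_eq, cb_eq]
      push_cast
      rw [show n = k + (n - k) by omega]
      rw [pow_add, pow_add]
      have h4 : ((4:ℝ)^k) ≠ 0 := by positivity
      have h4' : ((4:ℝ)^(n-k)) ≠ 0 := by positivity
      field_simp
      rw [Nat.add_sub_cancel_left]
      ring
    rw [Finset.sum_congr rfl this, ← Finset.sum_mul, ← Nat.cast_sum, centralBinom_conv]
    push_cast
    field_simp
  rw [tsum_congr hinner] at hmul
  rw [tsum_geometric_of_lt_one h0 h1] at hmul
  have hf0 : 0 ≤ ∑' k, cb k * x^k :=
    tsum_nonneg (fun k => mul_nonneg (cb_pos k).le (pow_nonneg h0 k))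
  have h1x : (0:ℝ) < 1 - x := by linarith
  have : (∑' k, cb k * x^k) = Real.sqrt ((1-x)⁻¹) := by
    rw [← hmul, Real.sqrt_mul_self hf0]
  rw [this, Real.sqrt_inv, one_div]

lemma cb_le_inv_sqrt (k : ℕ) : cb k ≤ 1 / Real.sqrt (2*k+1) := by
  have h1 : (0:ℝ) < 2*k+1 := by positivity
  have h2 : cb k ^ 2 ≤ 1 / (2*k+1) := by
    rw [le_div_iff₀ h1]; exact cb_sq_le k
  calc cb k = Real.sqrt (cb k ^2) := (Real.sqrt_sq (cb_pos k).le).symm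
    _ ≤ Real.sqrt (1/(2*k+1)) := Real.sqrt_le_sqrt h2
    _ = 1 / Real.sqrt (2*k+1) := by
        rw [one_div, one_div, Real.sqrt_inv]

lemma summable_cb_div : Summable (fun k : ℕ => cb k / (2*(k:ℝ)+1)) := by
  have hb : Summable (fun k : ℕ => 1 / (((k:ℝ)+1) * Real.sqrt ((k:ℝ)+1))) := by
    have h32 : Summable (fun n : ℕ => ((n:ℝ) ^ (3/2 : ℝ))⁻¹) :=
      Real.summable_nat_rpow_inv.mpr (by norm_num)
    have := (summable_nat_add_iff 1).mpr h32
    apply this.congr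
    intro k
    have hp : (0:ℝ) < (k:ℝ)+1 := by positivity
    push_cast
    rw [show (3/2:ℝ) = 1 + 1/2 by norm_num, Real.rpow_add hp, Real.rpow_one,
      ← Real.sqrt_eq_rpow, one_div]
  apply Summable.of_nonneg_of_le (fun k => div_nonneg (cb_pos k).le (by positivity)) (fun k => ?_) hb
  have hp : (0:ℝ) < (k:ℝ)+1 := by positivity
  have h1 : cb k ≤ 1 / Real.sqrt ((k:ℝ)+1) := by
    refine (cb_le_inv_sqrt k).trans ?_
    apply one_div_le_one_div_of_le (Real.sqrt_pos.mpr hp)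
    apply Real.sqrt_le_sqrt; linarith
  have h2 : 1 / (2*(k:ℝ)+1) ≤ 1 / ((k:ℝ)+1) := by
    apply one_div_le_one_div_of_le hp; linarith
  calc cb k / (2*(k:ℝ)+1) = cb k * (1/(2*(k:ℝ)+1)) := by ring
    _ ≤ (1 / Real.sqrt ((k:ℝ)+1)) * (1/((k:ℝ)+1)) := by
        apply mul_le_mul h1 h2 (by positivity) (by positivity)
    _ = 1 / (((k:ℝ)+1) * Real.sqrt ((k:ℝ)+1)) := by
        field_simp

open MeasureTheory intervalIntegral in
lemma integral_sin_pow_cos (k : ℕ) :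
    ∫ θ in (0:ℝ)..(Real.pi/2), Real.sin θ ^ (2*k) * Real.cos θ = 1/(2*(k:ℝ)+1) := by
  have hd : ∀ θ ∈ Set.uIcc (0:ℝ) (Real.pi/2),
      HasDerivAt (fun t => Real.sin t ^ (2*k+1) / (2*(k:ℝ)+1))
        (Real.sin θ ^ (2*k) * Real.cos θ) θ := by
    intro θ _
    have h := ((Real.hasDerivAt_sin θ).pow (2*k+1)).div_const (2*(k:ℝ)+1)
    refine h.congr_deriv ?_
    have : 2*k+1-1 = 2*k := by omega
    rw [this]
    push_cast
    field_simp
  have hint : IntervalIntegrable (fun θ => Real.sin θ ^ (2*k) * Real.cos θ)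
      volume 0 (Real.pi/2) :=
    (((Real.continuous_sin.pow _).mul Real.continuous_cos)).intervalIntegrable _ _
  rw [integral_eq_sub_of_hasDerivAt hd hint]
  rw [Real.sin_pi_div_two, Real.sin_zero, one_pow, zero_pow (by omega)]
  norm_num

open MeasureTheory in
lemma tsum_cb_div_eq : ∑' k : ℕ, cb k / (2*(k:ℝ)+1) = Real.pi/2 := by
  set S : Set ℝ := Set.Ioo 0 (Real.pi/2) with hS
  have hpi : (0:ℝ) < Real.pi/2 := by positivity
  set f : ℕ → ℝ → ℝ := fun k θ => cb k * (Real.sin θ ^ (2*k) * Real.cos θ) with hf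
  have hcont : ∀ k, Continuous (f k) :=
    fun k => continuous_const.mul ((Real.continuous_sin.pow _).mul Real.continuous_cos)
  -- value of each integral
  have hint : ∀ k, ∫ θ in S, f k θ = cb k / (2*(k:ℝ)+1) := by
    intro k
    rw [hS, ← MeasureTheory.integral_Ioc_eq_integral_Ioo,
      ← intervalIntegral.integral_of_le hpi.le]
    rw [intervalIntegral.integral_const_mul, integral_sin_pow_cos]
    ring
  have hintg : ∀ k, IntegrableOn (f k) S := by
    intro k
    exact ((hcont k).integrableOn_Icc (a := 0) (b := Real.pi/2)).mono_set
      Set.Ioo_subset_Icc_self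
  have hnn : ∀ k, ∀ θ ∈ S, 0 ≤ f k θ := by
    intro k θ hθ
    have hcos : 0 < Real.cos θ := Real.cos_pos_of_mem_Ioo
      ⟨by linarith [hθ.1, Real.pi_pos], by linarith [hθ.2, Real.pi_pos]⟩
    have hsin : 0 ≤ Real.sin θ := Real.sin_nonneg_of_nonneg_of_le_pi
      (le_of_lt hθ.1) (by linarith [hθ.2, Real.pi_pos])
    exact mul_nonneg (cb_pos k).le (mul_nonneg (pow_nonneg hsin _) hcos.le)
  -- finiteness for swapping
  have hfin : ∑' k, ∫⁻ θ in S, ‖f k θ‖₊ ∂volume ≠ ⊤ := by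
    have heq : ∀ k, ∫⁻ θ in S, (‖f k θ‖₊ : ENNReal) ∂volume
        = ENNReal.ofReal (cb k / (2*(k:ℝ)+1)) := by
      intro k
      rw [← hint k]
      rw [MeasureTheory.ofReal_integral_eq_lintegral_ofReal (hintg k)
        ((ae_restrict_iff' measurableSet_Ioo).mpr (Filter.Eventually.of_forall (hnn k)))]
      apply lintegral_congr_ae
      filter_upwards [ae_restrict_mem measurableSet_Ioo] with θ hθ
      rw [← Real.enorm_eq_ofReal (hnn k θ hθ)]
      rfl
    rw [tsum_congr heq]
    rw [← ENNReal.ofReal_tsum_of_nonneg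
      (fun k => div_nonneg (cb_pos k).le (by positivity)) summable_cb_div]
    exact ENNReal.ofReal_ne_top
  have hswap := MeasureTheory.integral_tsum
    (fun k => (hcont k).aestronglyMeasurable.restrict) hfin
  -- pointwise sum equals 1 on S
  have hpt : ∀ θ ∈ S, (∑' k, f k θ) = 1 := by
    intro θ hθ
    have hcos : 0 < Real.cos θ := Real.cos_pos_of_mem_Ioo
      ⟨by linarith [hθ.1, Real.pi_pos], by linarith [hθ.2, Real.pi_pos]⟩
    set x := Real.sin θ ^ 2 with hx
    have h0 : 0 ≤ x := sq_nonneg _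
    have h1x : 1 - x = Real.cos θ ^ 2 := by
      rw [hx, ← Real.sin_sq_add_cos_sq θ]; ring
    have h1 : x < 1 := by nlinarith
    have : (fun k => f k θ) = fun k => (cb k * x ^ k) * Real.cos θ := by
      funext k
      rw [hf, hx, ← pow_mul]
      ring
    rw [this, tsum_mul_right, tsum_cb_pow h0 h1, h1x, Real.sqrt_sq hcos.le]
    field_simp
  -- integral of constant 1 over S
  have hleft : ∫ θ in S, (∑' k, f k θ) = Real.pi/2 := by
    rw [MeasureTheory.setIntegral_congr_fun measurableSet_Ioo hpt]
    simp [hS, Real.volume_Ioo, ENNReal.toReal_ofReal hpi.le]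
    exact hpi.le
  rw [hleft, tsum_congr hint] at hswap
  exact hswap.symm

theorem stmt_7 : ∑' k : ℕ, (1/(2*((k:ℝ)+1)+1)) * cb (k+1) = Real.pi/2 - 1 := by
  have ha := summable_cb_div
  have hshift := Summable.tsum_eq_zero_add ha
  have ha0 : cb 0 / (2*((0:ℕ):ℝ)+1) = 1 := by
    rw [cb_zero]; norm_num
  rw [ha0, tsum_cb_div_eq] at hshift
  have : ∑' k : ℕ, (1/(2*((k:ℝ)+1)+1)) * cb (k+1)
      = ∑' k : ℕ, cb (k+1) / (2*(((k+1:ℕ)):ℝ)+1) := by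
    apply tsum_congr
    intro k
    push_cast
    ring
  rw [this]
  linarith
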